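/- Let κ : [0,∞) → ℝ and c₁ > 0 be such that the function f(t) = κ(t)·t is strongly monotone with constant c₁ on [0,∞), i.e., (f(t) − f(s))·(t − s) ≥ c₁·(t − s)² for all t, s ≥ 0. Then the function f_abs : ℝ → ℝ defined by f_abs(t) = κ(|t|)·t is strongly monotone with the same constant c₁ on all of ℝ, i.e., (f_abs(t) − f_abs(s))·(t − s) ≥ c₁·(t − s)² for all t, s ∈ ℝ. -/
import Mathlib

/-- If `f t = κ t * t` is strongly monotone with constant `c₁` on `[0,∞)`,
then `f_abs t = κ |t| * t` is strongly monotone with the same constant `c₁` on all of `ℝ`. -/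
theorem strongMonotone_abs_extension (κ : ℝ → ℝ) (c₁ : ℝ) (hc₁ : 0 < c₁)
    (hmono : ∀ t s : ℝ, 0 ≤ t → 0 ≤ s → (κ t * t - κ s * s) * (t - s) ≥ c₁ * (t - s) ^ 2) :
    ∀ t s : ℝ, (κ |t| * t - κ |s| * s) * (t - s) ≥ c₁ * (t - s) ^ 2 := by
  have key : ∀ u : ℝ, 0 ≤ u → κ u * u ≥ c₁ * u := by
    intro u hu
    rcases eq_or_lt_of_le hu with h | h
    · simp [← h]
    · have h0 := hmono u 0 hu le_rfl
      simp only [mul_zero, sub_zero] at h0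
      have : κ u * u * u ≥ c₁ * u * u := by nlinarith
      exact le_of_mul_le_mul_right this h
  intro t s
  rcases le_total 0 t with ht | ht <;> rcases le_total 0 s with hs | hs
  · rw [abs_of_nonneg ht, abs_of_nonneg hs]; exact hmono t s ht hs
  · rw [abs_of_nonneg ht, abs_of_nonpos hs]
    have h1 := key t ht
    have h2 := key (-s) (by linarith)
    nlinarith [mul_nonneg (by nlinarith : (0:ℝ) ≤ κ t * t + κ (-s) * (-s) - c₁ * (t - s))
      (by linarith : (0:ℝ) ≤ t - s)]
  · rw [abs_of_nonpos ht, abs_of_nonneg hs]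
    have h1 := key (-t) (by linarith)
    have h2 := key s hs
    nlinarith [mul_nonneg (by nlinarith : (0:ℝ) ≤ κ (-t) * (-t) + κ s * s - c₁ * (s - t))
      (by linarith : (0:ℝ) ≤ s - t)]
  · rw [abs_of_nonpos ht, abs_of_nonpos hs]
    have := hmono (-t) (-s) (by linarith) (by linarith)
    nlinarith [this]
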